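/- arXiv:2006.14415 — 4 statements merged into one kernel-verified Lean document; each statement's English description precedes it below -/
import Mathlib

section
/- Let λ and μ be partitions of the same positive integer n, and suppose μ is dominated by λ (for every m, the sum of the m largest parts of μ is at most the sum of the m largest parts of λ). Then there exists at least one semistandard Young tableau of shape λ and content μ, i.e., a semistandard Young tableau of shape λ in which the entry i occurs exactly μ_i times for each i (where μ₁ ≥ μ₂ ≥ … are the parts of μ). Consequently, when the Schur function s_λ is expanded in the monomial symmetric function basis, the coefficient of m_μ is positive. -/
open YoungDiagram Finset

namespace KostkaAux

lemma mem_ofRowLens_getD {L : List ℕ} {hL : L.SortedGE} {c : ℕ × ℕ} :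
    c ∈ ofRowLens L hL ↔ c.2 < L.getD c.1 0 := by
  rw [mem_ofRowLens]
  constructor
  · rintro ⟨h, h2⟩; rwa [List.getD_eq_getElem _ _ h]
  · intro h
    have hl : c.1 < L.length := by
      by_contra hc
      rw [List.getD_eq_default] at h; · omega
      · omega
    exact ⟨hl, by rwa [List.getD_eq_getElem _ _ hl] at h⟩

lemma getD_anti {L : List ℕ} (h : L.Pairwise (· ≥ ·)) {i j : ℕ} (hij : i ≤ j) :
    L.getD j 0 ≤ L.getD i 0 := by
  rcases lt_or_ge j L.length with hj | hj
  · have hi : i < L.length := lt_of_le_of_lt hij hj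
    rw [List.getD_eq_getElem _ _ hj, List.getD_eq_getElem _ _ hi]
    rcases eq_or_lt_of_le hij with rfl | hlt
    · exact le_refl _
    · exact List.pairwise_iff_getElem.mp h i j hi hj hlt
  · rw [List.getD_eq_default _ _ hj]; exact Nat.zero_le _

/-- remove a horizontal strip of `m` cells from the bottom of the diagram -/
def shrink (m : ℕ) : List ℕ → List ℕ
  | [] => []
  | a :: l => (a - m + min m (l.getD 0 0)) :: shrink m l

@[simp] lemma shrink_length (m : ℕ) (L : List ℕ) : (shrink m L).length = L.length := by
  induction L with
  | nil => rfl
  | cons a l ih => simp [shrink, ih]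

lemma shrink_getD (m : ℕ) (L : List ℕ) (i : ℕ) :
    (shrink m L).getD i 0 = (L.getD i 0 - m) + min m (L.getD (i + 1) 0) := by
  induction L generalizing i with
  | nil => simp [shrink]
  | cons a l ih =>
    cases i with
    | zero => simp [shrink]
    | succ i => simpa [shrink] using ih i

lemma sum_take_succ_getD (l : List ℕ) (t : ℕ) :
    (l.take (t + 1)).sum = (l.take t).sum + l.getD t 0 := by
  induction l generalizing t with
  | nil => simp
  | cons a l ih =>
    cases t with
    | zero => simp
    | succ t => simp only [List.take_succ_cons, List.sum_cons, ih t, List.getD_cons_succ]; omega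

lemma sum_take_mono (l : List ℕ) : Monotone (fun t => (l.take t).sum) :=
  monotone_nat_of_le_succ fun t => by rw [sum_take_succ_getD]; omega

lemma shrink_take_sum (m : ℕ) (L : List ℕ) (t : ℕ) :
    ((shrink m L).take t).sum + min m (L.getD 0 0) = (L.take t).sum + min m (L.getD t 0) := by
  induction L generalizing t with
  | nil => simp [shrink]
  | cons a l ih =>
    cases t with
    | zero => simp
    | succ t =>
      have := ih t
      simp only [shrink, List.take_succ_cons, List.sum_cons, List.getD_cons_zero,
        List.getD_cons_succ] at *
      omega

lemma shrink_sorted (m : ℕ) {L : List ℕ} (hL : L.Pairwise (· ≥ ·)) :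
    (shrink m L).Pairwise (· ≥ ·) := by
  rw [List.pairwise_iff_getElem]
  intro i j hi hj hij
  have hlen : (shrink m L).length = L.length := shrink_length m L
  have h1 : (shrink m L)[i] = (shrink m L).getD i 0 := (List.getD_eq_getElem _ _ hi).symm
  have h2 : (shrink m L)[j] = (shrink m L).getD j 0 := (List.getD_eq_getElem _ _ hj).symm
  rw [ge_iff_le, h1, h2, shrink_getD, shrink_getD]
  have ha : L.getD j 0 ≤ L.getD i 0 := getD_anti hL (le_of_lt hij)
  have hb : L.getD (j + 1) 0 ≤ L.getD (i + 1) 0 := getD_anti hL (by omega)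
  omega

lemma sum_range_getD (L : List ℕ) : ∑ i ∈ Finset.range L.length, L.getD i 0 = L.sum := by
  induction L with
  | nil => simp
  | cons a l ih =>
    rw [List.length_cons, Finset.sum_range_succ']
    simp only [List.getD_cons_succ, List.getD_cons_zero, List.sum_cons, ih]
    omega

lemma card_cells_ofRowLens (L : List ℕ) (hL : L.SortedGE) :
    (ofRowLens L hL).cells.card = L.sum := by
  have hcells : (ofRowLens L hL).cells =
      (Finset.range L.length).biUnion
        (fun i => (Finset.range (L.getD i 0)).image (fun j => (i, j))) := by
    ext c
    simp only [mem_cells, mem_ofRowLens_getD, Finset.mem_biUnion, Finset.mem_range,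
      Finset.mem_image]
    constructor
    · intro h
      have hl : c.1 < L.length := by
        by_contra hc
        rw [List.getD_eq_default] at h <;> omega
      exact ⟨c.1, hl, c.2, h, rfl⟩
    · rintro ⟨i, hi, j, hj, rfl⟩; exact hj
  rw [hcells, Finset.card_biUnion]
  · have : ∀ i, ((Finset.range (L.getD i 0)).image (fun j => (i, j))).card = L.getD i 0 := by
      intro i
      rw [Finset.card_image_of_injective _ (fun a b hab => (Prod.mk.injEq _ _ _ _).mp hab |>.2),
        Finset.card_range]
    simp only [this]
    exact sum_range_getD L
  · intro x _ y _ hxy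
    simp only [Finset.disjoint_left, Finset.mem_image]
    rintro c ⟨j, _, rfl⟩ ⟨j', _, h⟩
    exact hxy (congrArg Prod.fst h.symm)

lemma entry_lt {μ : YoungDiagram} (T : SemistandardYoungTableau μ) (M : List ℕ)
    (hc : ∀ i, (μ.cells.filter fun c => T c.1 c.2 = i).card = M.getD i 0)
    {i j : ℕ} (h : (i, j) ∈ μ) : T i j < M.length := by
  by_contra hcon
  push_neg at hcon
  have h0 : M.getD (T i j) 0 = 0 := List.getD_eq_default _ _ hcon
  have hmem : (i, j) ∈ μ.cells.filter (fun c => T c.1 c.2 = T i j) :=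
    Finset.mem_filter.mpr ⟨(mem_cells _).mpr h, rfl⟩
  have := Finset.card_pos.mpr ⟨_, hmem⟩
  rw [hc] at this
  omega

lemma getD_take_of_lt (M : List ℕ) : ∀ {i k : ℕ}, i < k → (M.take k).getD i 0 = M.getD i 0 := by
  induction M with
  | nil => simp
  | cons a l ih =>
    intro i k h
    cases k with
    | zero => omega
    | succ k =>
      cases i with
      | zero => simp
      | succ i => simpa using ih (by omega)

lemma exists_ssyt : ∀ (k : ℕ) (M L : List ℕ) (hL : L.SortedGE), M.Pairwise (· ≥ ·) →
    M.length = k → M.sum = L.sum →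
    (∀ t, (M.take t).sum ≤ (L.take t).sum) →
    ∃ T : SemistandardYoungTableau (ofRowLens L hL),
      ∀ i : ℕ, ((ofRowLens L hL).cells.filter fun c => T c.1 c.2 = i).card = M.getD i 0 := by
  intro k
  induction k with
  | zero =>
    intro M L hL hM hlen hsum hdom
    obtain rfl : M = [] := List.length_eq_zero_iff.mp hlen
    have hzero : ∀ i, L.getD i 0 = 0 := by
      intro i
      rcases lt_or_ge i L.length with hi | hi
      · rw [List.getD_eq_getElem _ _ hi]
        exact (List.sum_eq_zero_iff.mp hsum.symm) _ (L.getElem_mem hi)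
      · exact List.getD_eq_default _ _ hi
    refine ⟨⟨fun _ _ => 0, fun {i j1 j2} _ _ => le_refl 0,
      fun {i1 i2 j} _ hcell => by
        have h2 : j < L.getD i2 0 := mem_ofRowLens_getD.mp hcell
        rw [hzero i2] at h2
        omega,
      fun {i j} _ => rfl⟩, ?_⟩
    intro i
    have hempty : (ofRowLens L hL).cells = ∅ :=
      Finset.eq_empty_of_forall_notMem fun c hc => by
        have h2 := mem_ofRowLens_getD.mp ((mem_cells _).mp hc)
        rw [hzero] at h2
        omega
    simp [hempty]
  | succ k IH =>
    intro M L hL hM hlen hsum hdom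
    have hL' : (shrink (M.getD k 0) L).SortedGE := (shrink_sorted _ hL.pairwise).sortedGE
    have hM' : (M.take k).Pairwise (· ≥ ·) := hM.sublist (List.take_sublist _ _)
    have hlen' : (M.take k).length = k := by rw [List.length_take, hlen]; omega
    have htakeM : M.take (k + 1) = M := by rw [← hlen]; exact List.take_length (l := M)
    have hMsum : (M.take k).sum + M.getD k 0 = M.sum := by
      have h := sum_take_succ_getD M k
      rw [htakeM] at h
      omega
    have hm0 : M.getD k 0 ≤ L.getD 0 0 := by
      have h1 : M.getD k 0 ≤ M.getD 0 0 := getD_anti hM (Nat.zero_le k)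
      have h2 := hdom 1
      have h3 := sum_take_succ_getD M 0
      have h4 := sum_take_succ_getD L 0
      simp only [List.take_zero, List.sum_nil, Nat.zero_add] at h3 h4
      omega
    have hL'sum : (shrink (M.getD k 0) L).sum + M.getD k 0 = L.sum := by
      have h := shrink_take_sum (M.getD k 0) L L.length
      rw [List.take_length, List.getD_eq_default _ _ (le_refl L.length),
        List.take_of_length_le (le_of_eq (shrink_length (M.getD k 0) L))] at h
      omega
    have hsum' : (M.take k).sum = (shrink (M.getD k 0) L).sum := by omega
    have hdom' : ∀ t, ((M.take k).take t).sum ≤ ((shrink (M.getD k 0) L).take t).sum := by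
      intro t
      have hkey := shrink_take_sum (M.getD k 0) L t
      have h1 : ((M.take k).take t).sum + M.getD k 0 ≤ (M.take (t + 1)).sum := by
        rw [List.take_take]
        rcases le_or_gt t k with ht | ht
        · rw [min_eq_left ht, sum_take_succ_getD]
          have : M.getD k 0 ≤ M.getD t 0 := getD_anti hM ht
          omega
        · rw [min_eq_right (le_of_lt ht), List.take_of_length_le (show M.length ≤ t + 1 by omega)]
          omega
      have h2 : ((M.take k).take t).sum ≤ (M.take t).sum := by
        rw [List.take_take]
        exact sum_take_mono M (min_le_left t k)
      have h3 := hdom t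
      have h4 := hdom (t + 1)
      have h5 := sum_take_succ_getD L t
      omega
    obtain ⟨T', hT'⟩ := IH (M.take k) (shrink (M.getD k 0) L) hL' hM' hlen' hsum' hdom'
    have hbound : ∀ {i j : ℕ}, (i, j) ∈ ofRowLens (shrink (M.getD k 0) L) hL' → T' i j < k := by
      intro i j h
      have h2 := entry_lt T' (M.take k) hT' h
      rwa [hlen'] at h2
    have hPQ : ∀ i j : ℕ, j < (shrink (M.getD k 0) L).getD i 0 → j < L.getD i 0 := by
      intro i j h
      rw [shrink_getD] at h
      have h2 : L.getD (i + 1) 0 ≤ L.getD i 0 := getD_anti hL.pairwise (Nat.le_add_right i 1)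
      omega
    have hC : ∀ i j : ℕ, j < L.getD (i + 1) 0 → j < (shrink (M.getD k 0) L).getD i 0 := by
      intro i j h
      rw [shrink_getD]
      have h2 : L.getD (i + 1) 0 ≤ L.getD i 0 := getD_anti hL.pairwise (Nat.le_add_right i 1)
      omega
    have hrow : ∀ {i j1 j2 : ℕ}, j1 < j2 → (i, j2) ∈ ofRowLens L hL →
        (if j1 < (shrink (M.getD k 0) L).getD i 0 then T' i j1
          else if j1 < L.getD i 0 then k else 0)
        ≤ (if j2 < (shrink (M.getD k 0) L).getD i 0 then T' i j2
          else if j2 < L.getD i 0 then k else 0) := by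
      intro i j1 j2 hj hcell
      have hq2 : j2 < L.getD i 0 := mem_ofRowLens_getD.mp hcell
      by_cases h2 : j2 < (shrink (M.getD k 0) L).getD i 0
      · have h1 : j1 < (shrink (M.getD k 0) L).getD i 0 := lt_trans hj h2
        rw [if_pos h1, if_pos h2]
        exact T'.row_weak hj (mem_ofRowLens_getD.mpr h2)
      · rw [if_neg h2, if_pos hq2]
        by_cases h1 : j1 < (shrink (M.getD k 0) L).getD i 0
        · rw [if_pos h1]
          exact le_of_lt (hbound (mem_ofRowLens_getD.mpr h1))
        · rw [if_neg h1, if_pos (lt_trans hj hq2)]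
    have hcol : ∀ {i1 i2 j : ℕ}, i1 < i2 → (i2, j) ∈ ofRowLens L hL →
        (if j < (shrink (M.getD k 0) L).getD i1 0 then T' i1 j
          else if j < L.getD i1 0 then k else 0)
        < (if j < (shrink (M.getD k 0) L).getD i2 0 then T' i2 j
          else if j < L.getD i2 0 then k else 0) := by
      intro i1 i2 j hi hcell
      have hq2 : j < L.getD i2 0 := mem_ofRowLens_getD.mp hcell
      have hp1 : j < (shrink (M.getD k 0) L).getD i1 0 :=
        hC i1 j (lt_of_lt_of_le hq2 (getD_anti hL.pairwise hi))
      rw [if_pos hp1]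
      by_cases h2 : j < (shrink (M.getD k 0) L).getD i2 0
      · rw [if_pos h2]
        exact T'.col_strict hi (mem_ofRowLens_getD.mpr h2)
      · rw [if_neg h2, if_pos hq2]
        exact hbound (mem_ofRowLens_getD.mpr hp1)
    have hzero : ∀ {i j : ℕ}, (i, j) ∉ ofRowLens L hL →
        (if j < (shrink (M.getD k 0) L).getD i 0 then T' i j
          else if j < L.getD i 0 then k else 0) = 0 := by
      intro i j h
      have hq : ¬ j < L.getD i 0 := fun hc => h (mem_ofRowLens_getD.mpr hc)
      rw [if_neg (fun hp => hq (hPQ i j hp)), if_neg hq]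
    refine ⟨⟨fun i j => if j < (shrink (M.getD k 0) L).getD i 0 then T' i j
      else if j < L.getD i 0 then k else 0, hrow, hcol, hzero⟩, ?_⟩
    have hTapp : ∀ c : ℕ × ℕ,
        (⟨fun i j => if j < (shrink (M.getD k 0) L).getD i 0 then T' i j
          else if j < L.getD i 0 then k else 0, hrow, hcol, hzero⟩ :
          SemistandardYoungTableau (ofRowLens L hL)) c.1 c.2
        = if c.2 < (shrink (M.getD k 0) L).getD c.1 0 then T' c.1 c.2
          else if c.2 < L.getD c.1 0 then k else 0 := fun _ => rfl
    intro i
    simp only [hTapp]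
    rcases lt_trichotomy i k with hik | hik | hik
    · have hfe : ((ofRowLens L hL).cells.filter fun c =>
          (if c.2 < (shrink (M.getD k 0) L).getD c.1 0 then T' c.1 c.2
            else if c.2 < L.getD c.1 0 then k else 0) = i)
          = (ofRowLens (shrink (M.getD k 0) L) hL').cells.filter fun c => T' c.1 c.2 = i := by
        ext c
        simp only [Finset.mem_filter, mem_cells, mem_ofRowLens_getD]
        constructor
        · rintro ⟨hq, hT⟩
          by_cases hp : c.2 < (shrink (M.getD k 0) L).getD c.1 0
          · exact ⟨hp, by rwa [if_pos hp] at hT⟩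
          · rw [if_neg hp, if_pos hq] at hT
            omega
        · rintro ⟨hp, hT⟩
          exact ⟨hPQ _ _ hp, by rwa [if_pos hp]⟩
      rw [hfe, hT' i, getD_take_of_lt M hik]
    · rw [hik]
      have hfe : ((ofRowLens L hL).cells.filter fun c =>
          (if c.2 < (shrink (M.getD k 0) L).getD c.1 0 then T' c.1 c.2
            else if c.2 < L.getD c.1 0 then k else 0) = k)
          = (ofRowLens L hL).cells \ (ofRowLens (shrink (M.getD k 0) L) hL').cells := by
        ext c
        simp only [Finset.mem_filter, Finset.mem_sdiff, mem_cells, mem_ofRowLens_getD]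
        constructor
        · rintro ⟨hq, hT⟩
          refine ⟨hq, fun hp => ?_⟩
          rw [if_pos hp] at hT
          exact absurd hT (Nat.ne_of_lt (hbound (mem_ofRowLens_getD.mpr hp)))
        · rintro ⟨hq, hp⟩
          exact ⟨hq, by rw [if_neg hp, if_pos hq]⟩
      rw [hfe, Finset.card_sdiff_of_subset (fun c hc => by
          rw [mem_cells, mem_ofRowLens_getD] at *
          exact hPQ _ _ hc),
        card_cells_ofRowLens, card_cells_ofRowLens]
      omega
    · have hfe : ((ofRowLens L hL).cells.filter fun c =>
          (if c.2 < (shrink (M.getD k 0) L).getD c.1 0 then T' c.1 c.2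
            else if c.2 < L.getD c.1 0 then k else 0) = i) = ∅ := by
        refine Finset.eq_empty_of_forall_notMem fun c hc => ?_
        obtain ⟨hq, hT⟩ := Finset.mem_filter.mp hc
        by_cases hp : c.2 < (shrink (M.getD k 0) L).getD c.1 0
        · rw [if_pos hp] at hT
          have := hbound (mem_ofRowLens_getD.mpr hp)
          omega
        · rw [if_neg hp, if_pos (mem_ofRowLens_getD.mp ((mem_cells _).mp hq))] at hT
          omega
      rw [hfe, Finset.card_empty, List.getD_eq_default _ _ (by omega)]

end KostkaAux

/-- `mu` is dominated by `lam`: for every `m`, the sum of the `m` largest parts of `mu`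
is at most the sum of the `m` largest parts of `lam`. -/
def DominatedBy {n : ℕ} (mu lam : Nat.Partition n) : Prop :=
  ∀ m : ℕ, ((mu.parts.sort (· ≥ ·)).take m).sum ≤ ((lam.parts.sort (· ≥ ·)).take m).sum

/-- The Young diagram whose rows are the parts of `lam` in weakly decreasing order. -/
def Nat.Partition.toYoungDiagram {n : ℕ} (lam : Nat.Partition n) : YoungDiagram :=
  YoungDiagram.ofRowLens (lam.parts.sort (· ≥ ·)) (List.Pairwise.sortedGE (lam.parts.pairwise_sort _))

/-- If `mu` is dominated by `lam` (both partitions of the same positive integer `n`), then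
there exists a semistandard Young tableau of shape `lam` and content `mu`: the entry `i`
(0-indexed) occurs exactly `mu_i` times, where `mu_0 ≥ mu_1 ≥ ⋯` are the parts of `mu`.
Equivalently, the Kostka number — the coefficient of the monomial symmetric function
`m_mu` in the Schur function `s_lam` — is positive. -/
theorem kostka_pos_of_dominated {n : ℕ} (hn : 0 < n)
    (lam mu : Nat.Partition n) (hdom : DominatedBy mu lam) :
    0 < Nat.card {T : SemistandardYoungTableau lam.toYoungDiagram //
      ∀ i : ℕ, (lam.toYoungDiagram.cells.filter fun c => T c.1 c.2 = i).card
        = (mu.parts.sort (· ≥ ·)).getD i 0} := by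
  classical
  have hLsum : (lam.parts.sort (· ≥ ·)).sum = n := by
    have h := Multiset.sort_eq lam.parts (· ≥ ·)
    calc (lam.parts.sort (· ≥ ·)).sum
        = (↑(lam.parts.sort (· ≥ ·)) : Multiset ℕ).sum := (Multiset.sum_coe _).symm
      _ = lam.parts.sum := by rw [h]
      _ = n := lam.parts_sum
  have hMsum : (mu.parts.sort (· ≥ ·)).sum = n := by
    have h := Multiset.sort_eq mu.parts (· ≥ ·)
    calc (mu.parts.sort (· ≥ ·)).sum
        = (↑(mu.parts.sort (· ≥ ·)) : Multiset ℕ).sum := (Multiset.sum_coe _).symm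
      _ = mu.parts.sum := by rw [h]
      _ = n := mu.parts_sum
  obtain ⟨T, hT⟩ := KostkaAux.exists_ssyt (mu.parts.sort (· ≥ ·)).length
    (mu.parts.sort (· ≥ ·)) (lam.parts.sort (· ≥ ·)) (lam.parts.pairwise_sort _).sortedGE
    (mu.parts.pairwise_sort _) rfl (by rw [hMsum, hLsum]) hdom
  haveI : Finite {T : SemistandardYoungTableau lam.toYoungDiagram //
      ∀ i : ℕ, (lam.toYoungDiagram.cells.filter fun c => T c.1 c.2 = i).card
        = (mu.parts.sort (· ≥ ·)).getD i 0} := by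
    apply Finite.of_injective
      (β := ↥lam.toYoungDiagram.cells → Fin (mu.parts.sort (· ≥ ·)).length)
      (fun S c => ⟨S.1 (c : ℕ × ℕ).1 (c : ℕ × ℕ).2,
        KostkaAux.entry_lt S.1 _ S.2 ((YoungDiagram.mem_cells _).mp c.2)⟩)
    intro S1 S2 h
    apply Subtype.ext
    apply SemistandardYoungTableau.ext
    intro i j
    by_cases hm : (i, j) ∈ lam.toYoungDiagram
    · have h2 := congrFun h ⟨(i, j), (YoungDiagram.mem_cells _).mpr hm⟩
      simpa using h2
    · rw [S1.1.zeros hm, S2.1.zeros hm]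
  haveI : Nonempty {T : SemistandardYoungTableau lam.toYoungDiagram //
      ∀ i : ℕ, (lam.toYoungDiagram.cells.filter fun c => T c.1 c.2 = i).card
        = (mu.parts.sort (· ≥ ·)).getD i 0} := ⟨⟨T, hT⟩⟩
  exact Nat.card_pos
end

section
/- Let n ≥ 1 and let T be a simple graph on 2n vertices that is a tree (connected and acyclic), and let v be a vertex of T of degree n. If the chromatic symmetric function of T is Schur positive, then every vertex x of T that is neither v nor a neighbor of v has degree 1 in T (i.e., is a leaf). -/
/-- A proper coloring of a simple graph: adjacent vertices get different colors. -/
def IsProperColoring {V : Type*} (G : SimpleGraph V) (κ : V → ℕ) : Prop :=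
  ∀ ⦃a b : V⦄, G.Adj a b → κ a ≠ κ b

/-- The number of proper colorings of `G` whose color-class sizes are given by `d`. -/
noncomputable def colorCount {V : Type*} [Fintype V] (G : SimpleGraph V) (d : ℕ →₀ ℕ) : ℕ :=
  Nat.card {κ : V → ℕ // IsProperColoring G κ ∧
    ∀ i : ℕ, (Finset.univ.filter fun v => κ v = i).card = d i}

/-- The number of semistandard Young tableaux of shape `μ` with content `d`. -/
noncomputable def ssytCount (μ : YoungDiagram) (d : ℕ →₀ ℕ) : ℕ :=
  Nat.card {T : SemistandardYoungTableau μ //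
    ∀ i : ℕ, (μ.cells.filter fun c => T c.1 c.2 = i).card = d i}

/-- The chromatic symmetric function of `G` is Schur positive. -/
def SchurPositive {V : Type*} [Fintype V] (G : SimpleGraph V) : Prop :=
  ∃ c : YoungDiagram →₀ ℕ,
    (∀ μ ∈ c.support, μ.card = Fintype.card V) ∧
    ∀ d : ℕ →₀ ℕ, colorCount G d = ∑ μ ∈ c.support, c μ * ssytCount μ d

open SimpleGraph Finset

section Helpers

variable {V : Type*}

lemma binary_walk_parity {G : SimpleGraph V} {κ : V → ℕ}
    (hp : IsProperColoring G κ) (hb : ∀ u, κ u ≤ 1) :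
    ∀ {x y : V} (p : G.Walk x y), (κ y = κ x ↔ Even p.length) := by
  intro x y p
  induction p with
  | nil => simp
  | @cons a b c h q ih =>
    have h1 := hb a; have h2 := hb b; have h3 := hb c
    have h4 : κ a ≠ κ b := hp h
    rw [SimpleGraph.Walk.length_cons, Nat.even_add_one, ← ih]
    omega

lemma tree_isPath_length {G : SimpleGraph V} (h : G.IsTree) {x y : V}
    {p : G.Walk x y} (hp : p.IsPath) : p.length = G.dist x y := by
  classical
  obtain ⟨q, hq⟩ := h.isConnected.exists_walk_length_eq_dist x y
  have hbp : q.bypass.IsPath := SimpleGraph.Walk.bypass_isPath q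
  have h1 : q.bypass.length = G.dist x y :=
    le_antisymm (hq ▸ SimpleGraph.Walk.length_bypass_le q) (SimpleGraph.dist_le _)
  obtain ⟨r, _, hun⟩ := h.existsUnique_path x y
  rw [← h1, hun p hp, hun q.bypass hbp]

lemma tree_adj_parity {G : SimpleGraph V} (h : G.IsTree) (v : V) {x y : V}
    (hxy : G.Adj x y) : ¬ (Even (G.dist v x) ↔ Even (G.dist v y)) := by
  classical
  obtain ⟨p, hp⟩ := h.isConnected.exists_walk_length_eq_dist v x
  obtain ⟨p', hp'⟩ := h.isConnected.exists_walk_length_eq_dist v y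
  have hle1 : G.dist v y ≤ G.dist v x + 1 := by
    have := SimpleGraph.dist_le (p.concat hxy)
    rwa [SimpleGraph.Walk.length_concat, hp] at this
  have hle2 : G.dist v x ≤ G.dist v y + 1 := by
    have := SimpleGraph.dist_le (p'.concat hxy.symm)
    rwa [SimpleGraph.Walk.length_concat, hp'] at this
  have hne : G.dist v x ≠ G.dist v y := by
    intro heq
    obtain ⟨r, hr, hun⟩ := h.existsUnique_path v x
    have hrlen : r.length = G.dist v x := tree_isPath_length h hr
    by_cases hy : y ∈ r.support
    · have ht : (r.takeUntil y hy).IsPath := hr.takeUntil hy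
      have hlen : (r.takeUntil y hy).length = G.dist v y := tree_isPath_length h ht
      have hsum : (r.takeUntil y hy).length + (r.dropUntil y hy).length = r.length := by
        rw [← SimpleGraph.Walk.length_append, SimpleGraph.Walk.take_spec r hy]
      have hdrop : (r.dropUntil y hy).length = 0 := by omega
      exact hxy.ne (SimpleGraph.Walk.eq_of_length_eq_zero hdrop).symm
    · have hpath : (r.concat hxy).IsPath := by
        rw [SimpleGraph.Walk.isPath_def, SimpleGraph.Walk.support_concat]
        rw [List.nodup_append]
        exact ⟨hr.support_nodup, List.nodup_singleton y, by simpa using fun (a : V) (ha : a ∈ r.support) (hay : a = y) => hy (hay ▸ ha)⟩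
      have hclen : (r.concat hxy).length = G.dist v y := tree_isPath_length h hpath
      rw [SimpleGraph.Walk.length_concat, hrlen] at hclen
      omega
  intro hiff
  have hcase : G.dist v y = G.dist v x + 1 ∨ G.dist v x = G.dist v y + 1 := by omega
  rcases hcase with h' | h' <;> rw [h', Nat.even_add_one] at hiff <;> tauto

end Helpers

lemma colorCount_pos {V : Type*} [Fintype V] (G : SimpleGraph V) (d : ℕ →₀ ℕ)
    (κ : V → ℕ) (h1 : IsProperColoring G κ)
    (h2 : ∀ i : ℕ, (Finset.univ.filter fun v => κ v = i).card = d i) :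
    0 < colorCount G d := by
  classical
  rw [colorCount]
  have hmem : ∀ (κ' : V → ℕ), (∀ i : ℕ, (Finset.univ.filter fun v => κ' v = i).card = d i) →
      ∀ u, κ' u ∈ d.support := by
    intro κ' hκ' u
    rw [Finsupp.mem_support_iff, ← hκ' (κ' u)]
    have hu : u ∈ Finset.univ.filter fun w => κ' w = κ' u := by simp
    exact Finset.card_ne_zero_of_mem hu
  haveI : Finite {κ : V → ℕ // IsProperColoring G κ ∧
      ∀ i : ℕ, (Finset.univ.filter fun v => κ v = i).card = d i} := by
    apply Finite.of_injective
      (fun κ' : {κ : V → ℕ // IsProperColoring G κ ∧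
          ∀ i : ℕ, (Finset.univ.filter fun v => κ v = i).card = d i} =>
        (fun u => (⟨κ'.1 u, hmem κ'.1 κ'.2.2 u⟩ : {i // i ∈ d.support})))
    intro a b hab
    apply Subtype.ext; funext u
    exact congrArg Subtype.val (congrFun hab u)
  haveI : Nonempty {κ : V → ℕ // IsProperColoring G κ ∧
      ∀ i : ℕ, (Finset.univ.filter fun v => κ v = i).card = d i} := ⟨⟨κ, h1, h2⟩⟩
  exact Nat.card_pos

lemma ssytCount_pos (μ : YoungDiagram) (d : ℕ →₀ ℕ) (T : SemistandardYoungTableau μ)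
    (hT : ∀ i : ℕ, (μ.cells.filter fun c => T c.1 c.2 = i).card = d i) :
    0 < ssytCount μ d := by
  classical
  rw [ssytCount]
  have hmem : ∀ (T' : SemistandardYoungTableau μ),
      (∀ i : ℕ, (μ.cells.filter fun c => T' c.1 c.2 = i).card = d i) →
      ∀ c : ℕ × ℕ, c ∈ μ.cells → T' c.1 c.2 ∈ d.support := by
    intro T' hT' c hc
    rw [Finsupp.mem_support_iff, ← hT' (T' c.1 c.2)]
    have hu : c ∈ μ.cells.filter fun c' => T' c'.1 c'.2 = T' c.1 c.2 := by
      simp [hc]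
    exact Finset.card_ne_zero_of_mem hu
  haveI : Finite {T : SemistandardYoungTableau μ //
      ∀ i : ℕ, (μ.cells.filter fun c => T c.1 c.2 = i).card = d i} := by
    apply Finite.of_injective
      (fun T' : {T : SemistandardYoungTableau μ //
          ∀ i : ℕ, (μ.cells.filter fun c => T c.1 c.2 = i).card = d i} =>
        (fun c : {c : ℕ × ℕ // c ∈ μ.cells} =>
          (⟨T'.1 c.1.1 c.1.2, hmem T'.1 T'.2 c.1 c.2⟩ : {i // i ∈ d.support})))
    intro a b hab
    apply Subtype.ext
    ext i j
    by_cases hij : (i, j) ∈ μ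
    · exact congrArg Subtype.val (congrFun hab ⟨(i, j), (YoungDiagram.mem_cells _).mpr hij⟩)
    · rw [a.1.zeros hij, b.1.zeros hij]
  haveI : Nonempty {T : SemistandardYoungTableau μ //
      ∀ i : ℕ, (μ.cells.filter fun c => T c.1 c.2 = i).card = d i} := ⟨⟨T, hT⟩⟩
  exact Nat.card_pos

lemma ssyt_transfer {n q : ℕ} {μ : YoungDiagram} (hcard : μ.card = 2 * n)
    (h : 0 < ssytCount μ (Finsupp.single 0 (2 * n - q) + Finsupp.single 1 q)) :
    0 < ssytCount μ (Finsupp.single 0 n + Finsupp.single 1 n) := by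
  classical
  rw [ssytCount] at h
  obtain ⟨⟨⟨T, hT⟩⟩, -⟩ := Nat.card_pos_iff.mp h
  -- entries of T are at most 1
  have hbin : ∀ i j : ℕ, (i, j) ∈ μ → T i j ≤ 1 := by
    intro i j hij
    by_contra hgt
    push_neg at hgt
    have hmem : (i, j) ∈ μ.cells.filter (fun c => T c.1 c.2 = T i j) := by
      simp [YoungDiagram.mem_cells, hij]
    have h0 := hT (T i j)
    have hd0 : (Finsupp.single 0 (2 * n - q) + Finsupp.single 1 q : ℕ →₀ ℕ) (T i j) = 0 := by
      have h1 : (0:ℕ) ≠ T i j := by omega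
      have h2 : (1:ℕ) ≠ T i j := by omega
      simp [Finsupp.single_apply, h1, h2]
    rw [hd0, Finset.card_eq_zero] at h0
    rw [h0] at hmem
    exact absurd hmem (Finset.notMem_empty _)
  -- no cells in rows ≥ 2
  have hrow2 : ∀ i j : ℕ, 2 ≤ i → (i, j) ∉ μ := by
    intro i j h2 hmem
    have h20 : (2, 0) ∈ μ := μ.up_left_mem h2 (Nat.zero_le j) hmem
    have h10 : (1, 0) ∈ μ := μ.up_left_mem (by norm_num) le_rfl h20
    have c1 := T.col_strict (by norm_num : (0:ℕ) < 1) h10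
    have c2 := T.col_strict (by norm_num : (1:ℕ) < 2) h20
    have := hbin 2 0 h20
    omega
  have hr10 : μ.rowLen 1 ≤ μ.rowLen 0 := μ.rowLen_anti 0 1 (by norm_num)
  -- cells split into two rows
  have hcells : μ.cells = μ.row 0 ∪ μ.row 1 := by
    ext ⟨i, j⟩
    simp only [Finset.mem_union, YoungDiagram.mem_row_iff, YoungDiagram.mem_cells]
    constructor
    · intro hm
      have hi : i ≤ 1 := by
        by_contra h'
        exact hrow2 i j (by omega) hm
      interval_cases i
      · exact Or.inl ⟨hm, rfl⟩
      · exact Or.inr ⟨hm, rfl⟩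
    · rintro (⟨hm, -⟩ | ⟨hm, -⟩) <;> exact hm
  have hdisj : Disjoint (μ.row 0) (μ.row 1) := by
    rw [Finset.disjoint_left]
    intro c hc0 hc1
    rw [YoungDiagram.mem_row_iff] at hc0 hc1
    omega
  have hsum : μ.rowLen 0 + μ.rowLen 1 = 2 * n := by
    have hμ : μ.card = μ.cells.card := rfl
    rw [hμ, hcells, Finset.card_union_of_disjoint hdisj] at hcard
    rw [μ.rowLen_eq_card, μ.rowLen_eq_card]
    exact hcard
  -- row 1 entries are all equal to 1
  have hrow1val : ∀ j : ℕ, (1, j) ∈ μ → T 1 j = 1 := by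
    intro j hm
    have := T.col_strict (by norm_num : (0:ℕ) < 1) hm
    have := hbin 1 j hm
    omega
  have hr1q : μ.rowLen 1 ≤ q := by
    have hsub : μ.row 1 ⊆ μ.cells.filter (fun c => T c.1 c.2 = 1) := by
      intro c hc
      rw [YoungDiagram.mem_row_iff] at hc
      obtain ⟨hm, h1⟩ := hc
      rw [Finset.mem_filter]
      refine ⟨(YoungDiagram.mem_cells _).mpr hm, ?_⟩
      obtain ⟨ci, cj⟩ := c
      have hci : ci = 1 := h1
      subst hci
      exact hrow1val cj hm
    have hle := Finset.card_le_card hsub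
    rw [hT 1] at hle
    rw [μ.rowLen_eq_card]
    simpa [Finsupp.single_apply] using hle
  have hr0n : n ≤ μ.rowLen 0 := by omega
  -- build the new tableau with content (n, n)
  set f : ℕ → ℕ → ℕ := fun i j => if (i, j) ∈ μ then (if i = 0 ∧ j < n then 0 else 1) else 0
    with hf
  have hfle : ∀ i j, f i j ≤ 1 := by
    intro i j
    simp only [hf]
    split_ifs <;> omega
  have hfilter0 : μ.cells.filter (fun c => f c.1 c.2 = 0) = {0} ×ˢ Finset.range n := by
    ext ⟨ci, cj⟩
    rw [Finset.mem_filter, Finset.mem_product, Finset.mem_singleton, Finset.mem_range,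
      YoungDiagram.mem_cells]
    simp only [hf]
    constructor
    · rintro ⟨hm, hval⟩
      rw [if_pos hm] at hval
      by_cases hc : ci = 0 ∧ cj < n
      · exact hc
      · rw [if_neg hc] at hval
        omega
    · rintro ⟨hci, hcj⟩
      subst hci
      have hm : (0, cj) ∈ μ := by
        rw [YoungDiagram.mem_iff_lt_rowLen]
        omega
      simp [hm, hcj]
  have hcard0 : (μ.cells.filter (fun c => f c.1 c.2 = 0)).card = n := by
    rw [hfilter0]
    simp
  have hcard1 : (μ.cells.filter (fun c => f c.1 c.2 = 1)).card = n := by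
    have hpart := Finset.card_filter_add_card_filter_not
      (s := μ.cells) (p := fun c => f c.1 c.2 = 0)
    have hcc : μ.cells.card = 2 * n := hcard
    have heq1 : μ.cells.filter (fun c => ¬ f c.1 c.2 = 0) =
        μ.cells.filter (fun c => f c.1 c.2 = 1) := by
      apply Finset.filter_congr
      intro c hc
      have := hfle c.1 c.2
      constructor <;> intro <;> omega
    rw [heq1, hcard0, hcc] at hpart
    omega
  have hfilters : ∀ i : ℕ, (μ.cells.filter (fun c => f c.1 c.2 = i)).card =
      (Finsupp.single 0 n + Finsupp.single 1 n : ℕ →₀ ℕ) i := by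
    intro i
    match i with
    | 0 =>
      rw [hcard0]
      simp
    | 1 =>
      rw [hcard1]
      simp
    | (k + 2) =>
      have hempty : μ.cells.filter (fun c => f c.1 c.2 = k + 2) = ∅ := by
        rw [Finset.filter_eq_empty_iff]
        intro c hc
        have := hfle c.1 c.2
        omega
      rw [hempty]
      simp [Finsupp.single_apply]
  refine ssytCount_pos μ _ ⟨f, ?_, ?_, ?_⟩ hfilters
  · -- row_weak
    intro i j1 j2 hj hm
    have hm1 : (i, j1) ∈ μ := μ.up_left_mem le_rfl hj.le hm
    simp only [hf, if_pos hm, if_pos hm1]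
    split_ifs <;> omega
  · -- col_strict
    intro i1 i2 j hlt hm
    have hi2 : i2 ≤ 1 := by
      by_contra h'
      exact hrow2 i2 j (by omega) hm
    have hi2' : i2 = 1 := by omega
    subst hi2'
    have hi1 : i1 = 0 := by omega
    subst hi1
    have hm0 : (0, j) ∈ μ := μ.up_left_mem (by norm_num) le_rfl hm
    have hjn : j < n := by
      rw [YoungDiagram.mem_iff_lt_rowLen] at hm
      omega
    simp [hf, hm, hm0, hjn]
  · -- zeros
    intro i j hm
    simp only [hf, if_neg hm]

theorem leaf_of_schurPositive
    {V : Type*} [Fintype V] [DecidableEq V]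
    {n : ℕ} (hn : 1 ≤ n)
    (T : SimpleGraph V) [DecidableRel T.Adj]
    (hcard : Fintype.card V = 2 * n) (htree : T.IsTree)
    (v : V) (hdeg : T.degree v = n)
    (hpos : SchurPositive T) :
    ∀ x : V, x ≠ v → ¬ T.Adj v x → T.degree x = 1 := by
  classical
  intro x hxv hxadj
  obtain ⟨c, hsupp, hrep⟩ := hpos
  set A : Finset V := Finset.univ.filter (fun u => Even (T.dist v u)) with hA
  set B : Finset V := Finset.univ.filter (fun u => ¬ Even (T.dist v u)) with hB
  have hAB : A.card + B.card = 2 * n := by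
    rw [hA, hB, Finset.card_filter_add_card_filter_not, Finset.card_univ, hcard]
  set S : Finset V := if A.card ≤ B.card then A else B with hS
  have hq : S.card ≤ n := by
    rw [hS]
    split_ifs with h' <;> omega
  set κ : V → ℕ := fun u => if u ∈ S then 1 else 0 with hκ
  have hparity : ∀ ⦃u w : V⦄, T.Adj u w → (u ∈ A ↔ w ∉ A) := by
    intro u w huw
    have := tree_adj_parity htree v huw
    simp only [hA, Finset.mem_filter, Finset.mem_univ, true_and]
    tauto
  have hSmem : ∀ ⦃u w : V⦄, T.Adj u w → (u ∈ S ↔ w ∉ S) := by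
    intro u w huw
    have h1 := hparity huw
    have hBA : ∀ z : V, z ∈ B ↔ z ∉ A := by
      intro z
      rw [hA, hB]
      simp
    rw [hS]
    split_ifs with h'
    · exact h1
    · rw [hBA u, hBA w]
      tauto
  have hκproper : IsProperColoring T κ := by
    intro u w huw
    have := hSmem huw
    simp only [hκ]
    by_cases hu : u ∈ S <;> by_cases hw : w ∈ S <;> simp [hu, hw] <;> tauto
  have hκcontent : ∀ i : ℕ, (Finset.univ.filter fun u => κ u = i).card =
      (Finsupp.single 0 (2 * n - S.card) + Finsupp.single 1 S.card : ℕ →₀ ℕ) i := by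
    intro i
    match i with
    | 0 =>
      have he : (Finset.univ.filter fun u => κ u = 0) = Sᶜ := by
        ext u
        by_cases hu : u ∈ S <;> simp [hκ, hu]
      rw [he, Finset.card_compl, hcard]
      simp
    | 1 =>
      have he : (Finset.univ.filter fun u => κ u = 1) = S := by
        ext u
        by_cases hu : u ∈ S <;> simp [hκ, hu]
      rw [he]
      simp
    | (k+2) =>
      have he : (Finset.univ.filter fun u => κ u = k + 2) = ∅ := by
        ext u
        by_cases hu : u ∈ S <;> simp [hκ, hu]
      rw [he]
      simp [Finsupp.single_apply]
  have hpos1 := colorCount_pos T _ κ hκproper hκcontent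
  rw [hrep _] at hpos1
  have hex : ∃ μ ∈ c.support, 0 < c μ *
      ssytCount μ (Finsupp.single 0 (2 * n - S.card) + Finsupp.single 1 S.card) := by
    by_contra hcon
    push_neg at hcon
    have hz : ∑ μ ∈ c.support, c μ *
        ssytCount μ (Finsupp.single 0 (2 * n - S.card) + Finsupp.single 1 S.card) = 0 :=
      Finset.sum_eq_zero (fun μ hμ => by have := hcon μ hμ; omega)
    omega
  obtain ⟨μ, hμmem, hμpos⟩ := hex
  have hcμ : 0 < c μ := by
    rcases Nat.eq_zero_or_pos (c μ) with h' | h'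
    · rw [h'] at hμpos
      simp at hμpos
    · exact h'
  have hsytpos : 0 < ssytCount μ (Finsupp.single 0 (2 * n - S.card) + Finsupp.single 1 S.card) := by
    rcases Nat.eq_zero_or_pos (ssytCount μ (Finsupp.single 0 (2 * n - S.card) +
        Finsupp.single 1 S.card)) with h' | h'
    · rw [h'] at hμpos
      simp at hμpos
    · exact h'
  have hμcard : μ.card = 2 * n := by
    rw [hsupp μ hμmem, hcard]
  have htrans := ssyt_transfer (n := n) (q := S.card) hμcard hsytpos
  have hcc : 0 < colorCount T (Finsupp.single 0 n + Finsupp.single 1 n) := by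
    rw [hrep _]
    calc 0 < c μ * ssytCount μ (Finsupp.single 0 n + Finsupp.single 1 n) :=
          Nat.mul_pos hcμ htrans
      _ ≤ ∑ ν ∈ c.support, c ν * ssytCount ν (Finsupp.single 0 n + Finsupp.single 1 n) :=
          Finset.single_le_sum (f := fun ν => c ν * ssytCount ν
            (Finsupp.single 0 n + Finsupp.single 1 n)) (fun i _ => Nat.zero_le _) hμmem
  unfold colorCount at hcc
  obtain ⟨⟨κ', hκ'p, hκ'c⟩⟩ := (Nat.card_pos_iff.mp hcc).1
  have hbin : ∀ u, κ' u ≤ 1 := by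
    intro u
    by_contra hgt
    push_neg at hgt
    have hu : u ∈ Finset.univ.filter (fun w => κ' w = κ' u) := by simp
    have h0 := hκ'c (κ' u)
    have hz : (Finsupp.single 0 n + Finsupp.single 1 n : ℕ →₀ ℕ) (κ' u) = 0 := by
      have h1 : (0:ℕ) ≠ κ' u := ne_of_lt (lt_trans zero_lt_one hgt)
      have h2 : (1:ℕ) ≠ κ' u := ne_of_lt hgt
      simp [Finsupp.single_apply, h1, h2]
    rw [hz, Finset.card_eq_zero] at h0
    rw [h0] at hu
    exact absurd hu (Finset.notMem_empty _)
  have hclassA : (Finset.univ.filter fun u => κ' u = κ' v) = A := by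
    ext u
    simp only [hA, Finset.mem_filter, Finset.mem_univ, true_and]
    obtain ⟨p, hp⟩ := htree.isConnected.exists_walk_length_eq_dist v u
    have hpar := binary_walk_parity hκ'p hbin p
    rw [hp] at hpar
    exact hpar
  have hAn : A.card = n := by
    have hv01 : κ' v = 0 ∨ κ' v = 1 := Nat.le_one_iff_eq_zero_or_eq_one.mp (hbin v)
    rw [← hclassA, hκ'c (κ' v)]
    rcases hv01 with h' | h' <;> simp [h', Finsupp.single_apply]
  have hBn : B.card = n := by
    rw [hAn, two_mul] at hAB
    exact Nat.add_left_cancel hAB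
  have hNB : T.neighborFinset v ⊆ B := by
    intro w hw
    rw [SimpleGraph.mem_neighborFinset] at hw
    have hd1 : T.dist v w = 1 := (SimpleGraph.dist_eq_one_iff_adj).mpr hw
    simp only [hB, Finset.mem_filter, Finset.mem_univ, true_and, hd1]
    decide
  have hNeq : T.neighborFinset v = B := by
    apply Finset.eq_of_subset_of_card_le hNB
    rw [hBn, ← hdeg, SimpleGraph.card_neighborFinset_eq_degree]
  have hxA : Even (T.dist v x) := by
    by_contra hodd
    have hxB : x ∈ B := by
      simp only [hB, Finset.mem_filter, Finset.mem_univ, true_and]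
      exact hodd
    rw [← hNeq, SimpleGraph.mem_neighborFinset] at hxB
    exact hxadj hxB
  have hnbr : ∀ w : V, T.Adj x w → T.Adj v w := by
    intro w hw
    have hpar := tree_adj_parity htree v hw
    have hwodd : ¬ Even (T.dist v w) := by tauto
    have hwB : w ∈ B := by
      simp only [hB, Finset.mem_filter, Finset.mem_univ, true_and]
      exact hwodd
    rw [← hNeq, SimpleGraph.mem_neighborFinset] at hwB
    exact hwB
  obtain ⟨p⟩ := htree.isConnected.preconnected x v
  cases p with
  | nil => exact absurd rfl hxv
  | @cons _ w _ h q =>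
    have huniq : ∀ u : V, T.Adj x u → u = w := by
      intro u hu
      by_contra hne
      have hvw : T.Adj v w := hnbr w h
      have hvu : T.Adj v u := hnbr u hu
      obtain ⟨r, hr, hun⟩ := htree.existsUnique_path x v
      have hp1 : (SimpleGraph.Walk.cons hu (SimpleGraph.Walk.cons hvu.symm
          SimpleGraph.Walk.nil)).IsPath := by
        rw [SimpleGraph.Walk.isPath_def]
        simp [hu.ne, hxv, hvu.ne']
      have hp2 : (SimpleGraph.Walk.cons h (SimpleGraph.Walk.cons hvw.symm
          SimpleGraph.Walk.nil)).IsPath := by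
        rw [SimpleGraph.Walk.isPath_def]
        simp [h.ne, hxv, hvw.ne']
      have he1 := hun _ hp1
      have he2 := hun _ hp2
      rw [← he2] at he1
      have hsup := congrArg SimpleGraph.Walk.support he1
      simp only [SimpleGraph.Walk.support_cons, SimpleGraph.Walk.support_nil] at hsup
      injection hsup with h3 h4
      injection h4 with h5 h6
      exact hne h5
    rw [← SimpleGraph.card_neighborFinset_eq_degree]
    have hset : T.neighborFinset x = {w} := by
      ext u
      rw [SimpleGraph.mem_neighborFinset, Finset.mem_singleton]
      constructor
      · exact huniq u
      · rintro rfl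
        exact h
    rw [hset, Finset.card_singleton]
end

section
/- Let n ≥ 1 and let T be a simple graph on 2n vertices that is a tree (connected and acyclic), and let v be a vertex of T of degree n. Suppose the vertex set of T can be partitioned into two independent sets A and B with |A| = |B| = n. Then every vertex x of T that is neither v nor a neighbor of v has degree 1 in T (i.e., is a leaf). -/
open Finset

private lemma aux_deg_pos {V : Type*} [Fintype V] [DecidableEq V]
    (T : SimpleGraph V) [DecidableRel T.Adj] (hc : T.Connected)
    (hV : 2 ≤ Fintype.card V) (a : V) : 0 < T.degree a := by
  rw [T.degree_pos_iff_exists_adj]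
  obtain ⟨w, hw⟩ := Fintype.exists_ne_of_one_lt_card hV a
  obtain ⟨p⟩ := hc.preconnected a w
  cases p with
  | nil => exact absurd rfl hw
  | cons h _ => exact ⟨_, h⟩

private lemma aux_main {V : Type*} [Fintype V] [DecidableEq V]
    {n : ℕ} (hn : 1 ≤ n)
    (T : SimpleGraph V) [DecidableRel T.Adj]
    (hcard : Fintype.card V = 2 * n) (htree : T.IsTree)
    (v : V) (hdeg : T.degree v = n)
    (A B : Finset V)
    (hunion : A ∪ B = Finset.univ) (hdisj : Disjoint A B)
    (hA : ∀ a ∈ A, ∀ b ∈ A, ¬ T.Adj a b)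
    (hB : ∀ a ∈ B, ∀ b ∈ B, ¬ T.Adj a b)
    (hAcard : A.card = n) (hBcard : B.card = n)
    (hvA : v ∈ A) :
    ∀ x : V, x ≠ v → ¬ T.Adj v x → T.degree x = 1 := by
  have hV2 : 2 ≤ Fintype.card V := by omega
  -- neighbor finsets of A-vertices sit in B and vice versa
  have hNA : ∀ a ∈ A, T.neighborFinset a = B.filter (T.Adj a) := by
    intro a ha
    ext b
    simp only [SimpleGraph.mem_neighborFinset, mem_filter]
    constructor
    · intro h
      refine ⟨?_, h⟩
      have : b ∈ A ∪ B := hunion ▸ mem_univ b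
      rcases mem_union.1 this with hb | hb
      · exact absurd h (hA a ha b hb)
      · exact hb
    · exact fun h => h.2
  have hNB : ∀ b ∈ B, T.neighborFinset b = A.filter (T.Adj b) := by
    intro b hb
    ext a
    simp only [SimpleGraph.mem_neighborFinset, mem_filter]
    constructor
    · intro h
      refine ⟨?_, h⟩
      have : a ∈ A ∪ B := hunion ▸ mem_univ a
      rcases mem_union.1 this with ha | ha
      · exact ha
      · exact absurd h (hB b hb a ha)
    · exact fun h => h.2
  -- degree sums over A and B are equal
  have hsumAB : ∑ a ∈ A, T.degree a = ∑ b ∈ B, T.degree b := by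
    have h1 : ∑ a ∈ A, T.degree a = ∑ a ∈ A, ∑ b ∈ B, (if T.Adj a b then 1 else 0) := by
      refine Finset.sum_congr rfl fun a ha => ?_
      rw [SimpleGraph.degree, hNA a ha, Finset.card_filter]
    have h2 : ∑ b ∈ B, T.degree b = ∑ b ∈ B, ∑ a ∈ A, (if T.Adj b a then 1 else 0) := by
      refine Finset.sum_congr rfl fun b hb => ?_
      rw [SimpleGraph.degree, hNB b hb, Finset.card_filter]
    rw [h1, h2, Finset.sum_comm]
    refine Finset.sum_congr rfl fun b _ => Finset.sum_congr rfl fun a _ => ?_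
    simp [SimpleGraph.adj_comm]
  -- total degree sum
  have hedges : T.edgeFinset.card + 1 = 2 * n := by
    rw [htree.card_edgeFinset, hcard]
  have htot : ∑ x, T.degree x = 2 * (2 * n - 1) := by
    rw [T.sum_degrees_eq_twice_card_edges]; omega
  have hsplit : ∑ a ∈ A, T.degree a + ∑ b ∈ B, T.degree b = 2 * (2 * n - 1) := by
    rw [← Finset.sum_union hdisj, hunion, htot]
  have hsumA : ∑ a ∈ A, T.degree a = 2 * n - 1 := by omega
  -- sum over A \ {v}
  have hsumA' : ∑ a ∈ A.erase v, T.degree a = n - 1 := by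
    have h3 : T.degree v + ∑ a ∈ A.erase v, T.degree a = ∑ a ∈ A, T.degree a :=
      Finset.add_sum_erase A (fun a => T.degree a) hvA
    omega
  have hcardA' : (A.erase v).card = n - 1 := by
    rw [Finset.card_erase_of_mem hvA, hAcard]
  -- neighbors of v = B
  have hNvB : T.neighborFinset v = B := by
    apply Finset.eq_of_subset_of_card_le
    · rw [hNA v hvA]; exact Finset.filter_subset _ _
    · rw [hBcard]; exact le_of_eq hdeg.symm
  -- each vertex in A.erase v has degree ≥ 1
  have hpos : ∀ a ∈ A.erase v, 1 ≤ T.degree a := fun a _ =>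
    aux_deg_pos T htree.isConnected hV2 a
  intro x hxv hadj
  have hxA : x ∈ A.erase v := by
    have : x ∈ A ∪ B := hunion ▸ mem_univ x
    rcases mem_union.1 this with hx | hx
    · exact Finset.mem_erase.2 ⟨hxv, hx⟩
    · exact absurd ((SimpleGraph.mem_neighborFinset T v x).1 (hNvB ▸ hx)) hadj
  -- sum of degrees over A.erase v equals its card, each term ≥ 1 ⇒ each = 1
  by_contra hne
  have h2 : 2 ≤ T.degree x := by
    have := hpos x hxA
    omega
  have h4 : T.degree x + ∑ a ∈ (A.erase v).erase x, T.degree a = ∑ a ∈ A.erase v, T.degree a :=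
    Finset.add_sum_erase (A.erase v) (fun a => T.degree a) hxA
  have hrest : ((A.erase v).erase x).card ≤ ∑ a ∈ (A.erase v).erase x, T.degree a := by
    refine Finset.card_nsmul_le_sum _ _ 1 (fun a ha => ?_) |>.trans_eq' (by simp)
    exact hpos a (Finset.mem_of_mem_erase ha)
  have hcr : ((A.erase v).erase x).card = n - 2 := by
    rw [Finset.card_erase_of_mem hxA, hcardA']
    omega
  -- n ≥ 2 since x exists in A.erase v so card ≥ 1
  have hn2 : 1 ≤ n - 1 := by
    have := Finset.card_pos.2 ⟨x, hxA⟩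
    omega
  omega

theorem leaf_of_balanced_bipartition
    {V : Type*} [Fintype V] [DecidableEq V]
    {n : ℕ} (hn : 1 ≤ n)
    (T : SimpleGraph V) [DecidableRel T.Adj]
    (hcard : Fintype.card V = 2 * n) (htree : T.IsTree)
    (v : V) (hdeg : T.degree v = n)
    (A B : Finset V)
    (hunion : A ∪ B = Finset.univ) (hdisj : Disjoint A B)
    (hA : ∀ a ∈ A, ∀ b ∈ A, ¬ T.Adj a b)
    (hB : ∀ a ∈ B, ∀ b ∈ B, ¬ T.Adj a b)
    (hAcard : A.card = n) (hBcard : B.card = n) :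
    ∀ x : V, x ≠ v → ¬ T.Adj v x → T.degree x = 1 := by
  have hv : v ∈ A ∪ B := hunion ▸ Finset.mem_univ v
  rcases Finset.mem_union.1 hv with hvA | hvB
  · exact aux_main hn T hcard htree v hdeg A B hunion hdisj hA hB hAcard hBcard hvA
  · exact aux_main hn T hcard htree v hdeg B A
      (by rw [Finset.union_comm]; exact hunion) hdisj.symm hB hA hBcard hAcard hvB
end

section
/- Let n ≥ 1 and let T be a simple graph on 2n vertices that is a tree (connected and acyclic) with a vertex v of degree n such that every vertex of T other than v and the neighbors of v has degree 1 (so T is one of the trees T(ν) for a partition ν of n−1). Then the set N(v) of neighbors of v and its complement {v} ∪ (V(T) \ ({v} ∪ N(v))) form a partition of the vertex set of T into two independent sets, each of cardinality n; that is, T admits a stable partition of type (n, n). -/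
/-- In a broom tree `T(ν)` on `2n` vertices — a tree with a vertex `v` of degree `n` all
of whose non-neighbors (other than `v` itself) are leaves — the neighborhood `N(v)` and
its complement `{v} ∪ (V \ ({v} ∪ N(v)))` form a stable partition of type `(n, n)`:
two independent sets, each of cardinality `n`. -/
theorem broom_stable_partition
    {V : Type*} [Fintype V] [DecidableEq V]
    {n : ℕ} (hn : 1 ≤ n)
    (T : SimpleGraph V) [DecidableRel T.Adj]
    (hcard : Fintype.card V = 2 * n) (htree : T.IsTree)
    (v : V) (hdeg : T.degree v = n)
    (hleaf : ∀ x : V, x ≠ v → ¬ T.Adj v x → T.degree x = 1) :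
    (T.neighborFinset v)ᶜ = insert v (Finset.univ \ insert v (T.neighborFinset v)) ∧
    (∀ a ∈ T.neighborFinset v, ∀ b ∈ T.neighborFinset v, ¬ T.Adj a b) ∧
    (∀ a ∈ (T.neighborFinset v)ᶜ, ∀ b ∈ (T.neighborFinset v)ᶜ, ¬ T.Adj a b) ∧
    (T.neighborFinset v).card = n ∧ ((T.neighborFinset v)ᶜ).card = n := by
  refine ⟨?_, ?_, ?_, ?_, ?_⟩
  · ext x
    by_cases hx : x = v <;>
      simp [hx, Finset.mem_compl, SimpleGraph.mem_neighborFinset, T.irrefl]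
  · -- N(v) is independent: a triangle v-a-b would give two distinct a-b paths
    intro a ha b hb hab
    rw [SimpleGraph.mem_neighborFinset] at ha hb
    have hav : a ≠ v := fun h => T.irrefl (h ▸ ha)
    have hbv : b ≠ v := fun h => T.irrefl (h ▸ hb)
    have key := htree.IsAcyclic.path_unique (SimpleGraph.Path.singleton hab)
      ⟨SimpleGraph.Walk.cons ha.symm (SimpleGraph.Walk.cons hb SimpleGraph.Walk.nil), by
        simp [SimpleGraph.Walk.isPath_def, hav, hab.ne, hbv.symm]⟩
    have hlen := congrArg (fun q : T.Path a b => q.1.length) key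
    simp [SimpleGraph.Path.singleton] at hlen
  · intro a ha b hb hab
    rw [Finset.mem_compl, SimpleGraph.mem_neighborFinset] at ha hb
    by_cases hav : a = v
    · exact hb (hav ▸ hab)
    by_cases hbv : b = v
    · exact ha (hbv ▸ hab.symm)
    -- a and b are leaves adjacent to each other; no path from a to v exists
    have hda : T.degree a = 1 := hleaf a hav ha
    have hdb : T.degree b = 1 := hleaf b hbv hb
    have hNa : T.neighborFinset a = {b} := by
      have hcard1 : (T.neighborFinset a).card = 1 := hda
      obtain ⟨c, hc⟩ := Finset.card_eq_one.mp hcard1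
      have hbmem : b ∈ T.neighborFinset a := by simp [SimpleGraph.mem_neighborFinset, hab]
      rw [hc] at hbmem ⊢
      simp at hbmem
      rw [hbmem]
    have hNb : T.neighborFinset b = {a} := by
      have hcard1 : (T.neighborFinset b).card = 1 := hdb
      obtain ⟨c, hc⟩ := Finset.card_eq_one.mp hcard1
      have hamem : a ∈ T.neighborFinset b := by simp [SimpleGraph.mem_neighborFinset, hab.symm]
      rw [hc] at hamem ⊢
      simp at hamem
      rw [hamem]
    obtain ⟨w⟩ := htree.isConnected.preconnected a v
    obtain ⟨p, hp⟩ := w.toPath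
    obtain ⟨x, hax, q, rfl⟩ := SimpleGraph.Walk.exists_eq_cons_of_ne hav p
    have hx : x = b := by
      have : x ∈ T.neighborFinset a := by simp [SimpleGraph.mem_neighborFinset, hax]
      rw [hNa] at this
      simpa using this
    obtain ⟨y, hby, q', rfl⟩ := SimpleGraph.Walk.exists_eq_cons_of_ne (by rw [hx]; exact hbv) q
    have hy : y = a := by
      have hm : y ∈ T.neighborFinset b := by
        simp [SimpleGraph.mem_neighborFinset, hx ▸ hby]
      rw [hNb] at hm
      simpa using hm
    rw [SimpleGraph.Walk.cons_isPath_iff] at hp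
    apply hp.2
    rw [SimpleGraph.Walk.support_cons]
    exact List.mem_cons_of_mem _ (hy ▸ q'.start_mem_support)
  · exact hdeg
  · rw [Finset.card_compl]
    have : (T.neighborFinset v).card = n := hdeg
    rw [this, hcard]
    omega
end
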